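/- arXiv:2101.05113 — 2 statements merged into one kernel-verified Lean document; each statement's English description precedes it below -/
import Mathlib

section
/- Let Z = [X; Y] ∈ ℝ^{(n₁+n₂)×r} and suppose the optimal alignment matrix Q between Z and Z⋆ exists. Then, setting X̃ = XQ and Ỹ = YQ⁻ᵀ, one has X̃ᵀ(X̃ − X⋆) = (Ỹ − Y⋆)ᵀỸ. -/
open Matrix BigOperators

/-- Frobenius norm of a real matrix. -/
noncomputable def frobNorm {m n : ℕ} (A : Matrix (Fin m) (Fin n) ℝ) : ℝ :=
  Real.sqrt (∑ i, ∑ j, (A i j) ^ 2)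

/-- Spectral norm (largest singular value) of a real matrix. -/
noncomputable def specNorm {m n : ℕ} (A : Matrix (Fin m) (Fin n) ℝ) : ℝ :=
  ‖LinearMap.toContinuousLinearMap (Matrix.toEuclideanLin A)‖

/-- Smallest singular value of a matrix with `r` columns (the `r`-th largest singular value). -/
noncomputable def sigmaMinCol {m r : ℕ} (A : Matrix (Fin m) (Fin r) ℝ) : ℝ :=
  sInf { s | ∃ v : EuclideanSpace ℝ (Fin r), ‖v‖ = 1 ∧ s = ‖Matrix.toEuclideanLin A v‖ }

/-- Matrix inner product `⟨A, B⟩ = Tr(Bᵀ A)`. -/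
noncomputable def matInner {m n : ℕ} (A B : Matrix (Fin m) (Fin n) ℝ) : ℝ :=
  Matrix.trace (Bᵀ * A)

/-- Euclidean norm on `ℝ^m`. -/
noncomputable def vec2Norm {m : ℕ} (y : Fin m → ℝ) : ℝ :=
  Real.sqrt (∑ i, (y i) ^ 2)

/-- The sensing operator `𝒜(M) = (⟨A_i, M⟩)_{i=1..m}`. -/
noncomputable def senseOp {n₁ n₂ m : ℕ} (As : Fin m → Matrix (Fin n₁) (Fin n₂) ℝ)
    (M : Matrix (Fin n₁) (Fin n₂) ℝ) : Fin m → ℝ :=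
  fun i => matInner (As i) M

/-- The adjoint operator `𝒜*(y) = ∑ i, y i • A i`. -/
noncomputable def senseAdj {n₁ n₂ m : ℕ} (As : Fin m → Matrix (Fin n₁) (Fin n₂) ℝ)
    (y : Fin m → ℝ) : Matrix (Fin n₁) (Fin n₂) ℝ :=
  ∑ i, y i • As i

/-- Rank-`k` restricted isometry property with constant `δ`. -/
def HasRIP {n₁ n₂ m : ℕ} (As : Fin m → Matrix (Fin n₁) (Fin n₂) ℝ) (k : ℕ) (δ : ℝ) : Prop :=
  0 ≤ δ ∧ δ < 1 ∧
  ∀ M : Matrix (Fin n₁) (Fin n₂) ℝ, M.rank ≤ k →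
    (1 - δ) * (frobNorm M) ^ 2 ≤ (vec2Norm (senseOp As M)) ^ 2 ∧
    (vec2Norm (senseOp As M)) ^ 2 ≤ (1 + δ) * (frobNorm M) ^ 2

/-- dist(Z, Z⋆): infimum over invertible `P` of
`sqrt(‖XP − X⋆‖_F² + ‖YP⁻ᵀ − Y⋆‖_F²)`. -/
noncomputable def distZ {n₁ n₂ r : ℕ} (X Xs : Matrix (Fin n₁) (Fin r) ℝ)
    (Y Ys : Matrix (Fin n₂) (Fin r) ℝ) : ℝ :=
  sInf { v | ∃ P : Matrix (Fin r) (Fin r) ℝ, IsUnit P ∧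
    v = Real.sqrt ((frobNorm (X * P - Xs)) ^ 2 + (frobNorm (Y * (P⁻¹)ᵀ - Ys)) ^ 2) }

noncomputable def Fsq {m n : ℕ} (A : Matrix (Fin m) (Fin n) ℝ) : ℝ := ∑ i, ∑ j, (A i j) ^ 2

noncomputable def ip {m n : ℕ} (A B : Matrix (Fin m) (Fin n) ℝ) : ℝ := ∑ i, ∑ j, A i j * B i j

lemma frob_sq {m n : ℕ} (A : Matrix (Fin m) (Fin n) ℝ) : frobNorm A ^ 2 = Fsq A := by
  rw [frobNorm, Fsq, Real.sq_sqrt]; positivity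

lemma Fsq_nonneg {m n : ℕ} (A : Matrix (Fin m) (Fin n) ℝ) : 0 ≤ Fsq A := by
  unfold Fsq; positivity

lemma Fsq_expand {m n : ℕ} (A B : Matrix (Fin m) (Fin n) ℝ) (t : ℝ) :
    Fsq (A + t • B) = Fsq A + 2 * t * ip A B + t ^ 2 * Fsq B := by
  unfold Fsq ip
  simp only [Finset.mul_sum, ← Finset.sum_add_distrib]
  refine Finset.sum_congr rfl fun i _ => Finset.sum_congr rfl fun j _ => ?_
  simp only [Matrix.add_apply, Matrix.smul_apply, smul_eq_mul]
  ring

lemma mul_std_apply {m r : ℕ} (M : Matrix (Fin m) (Fin r) ℝ) (p q : Fin r) (a : Fin m) (b : Fin r) :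
    (M * Matrix.single p q (1:ℝ)) a b = if b = q then M a p else 0 := by
  rw [Matrix.mul_apply]
  by_cases h : b = q
  · subst h
    simp [Matrix.single, Finset.sum_ite_eq, eq_comm]
  · simp [Matrix.single, h, fun x => (show ¬(p = x ∧ q = b) from fun ⟨_, h2⟩ => h h2.symm)]

lemma ip_std {m r : ℕ} (A M : Matrix (Fin m) (Fin r) ℝ) (p q : Fin r) :
    ip A (M * Matrix.single p q (1:ℝ)) = (Mᵀ * A) p q := by
  unfold ip
  rw [Matrix.mul_apply]
  have h1 : ∀ i : Fin m, ∑ j, A i j * (M * Matrix.single p q (1:ℝ)) i j = M i p * A i q := by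
    intro i
    rw [Finset.sum_eq_single q]
    · rw [mul_std_apply]; simp [mul_comm]
    · intro b _ hb; rw [mul_std_apply]; simp [hb]
    · simp
  simp only [h1, Matrix.transpose_apply]

lemma std_transpose {r : ℕ} (i j : Fin r) (c : ℝ) :
    (Matrix.single i j c)ᵀ = Matrix.single j i c := by
  ext a b; simp [Matrix.single, and_comm]


lemma expand_unit {r : ℕ} (e : Matrix (Fin r) (Fin r) ℝ) (t s : ℝ) :
    (1 + t • e) * (1 + s • e) = 1 + (t + s) • e + (s * t) • (e * e) := by
  simp only [add_mul, mul_add, one_mul, mul_one, Matrix.smul_mul, Matrix.mul_smul, smul_smul,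
    add_smul]
  abel

lemma key_lemma (b C : ℝ) (δ : ℝ) (hδ : 0 < δ) (hC : 0 ≤ C)
    (h : ∀ t : ℝ, |t| ≤ δ → 0 ≤ 2 * t * b + t ^ 2 * C) : b = 0 := by
  by_contra hb
  have hab : 0 < |b| := abs_pos.mpr hb
  set t0 : ℝ := min δ (|b| / (C + 1)) with ht0
  have ht0pos : 0 < t0 := lt_min hδ (by positivity)
  have ht0le : t0 ≤ δ := min_le_left _ _
  have h1 := h (-(b / |b|) * t0) (by
    rw [abs_mul, abs_neg, abs_div, abs_abs, div_self (ne_of_gt hab), one_mul, abs_of_pos ht0pos]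
    exact ht0le)
  have hsq : (-(b / |b|) * t0) ^ 2 = t0 ^ 2 := by
    rw [mul_pow, neg_pow, div_pow, sq_abs, div_self (by positivity)]
    ring
  have hlin : 2 * (-(b / |b|) * t0) * b = -2 * |b| * t0 := by
    have : b / |b| * b = |b| := by
      rw [div_mul_eq_mul_div, ← abs_mul_abs_self b, mul_div_assoc, div_self (ne_of_gt hab), mul_one]
    nlinarith [this]
  rw [hsq, hlin] at h1
  have ht0r : t0 ≤ |b| / (C + 1) := min_le_right _ _
  have h2 : t0 * C < 2 * |b| := by
    have h4 : t0 * C ≤ (|b| / (C + 1)) * C := by nlinarith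
    have h3 : (|b| / (C + 1)) * C < 2 * |b| := by
      rw [div_mul_eq_mul_div, div_lt_iff₀ (by positivity)]
      nlinarith
    linarith
  nlinarith [mul_pos ht0pos hab]


lemma offdiag_real (a b FX FY : ℝ) (hFX : 0 ≤ FX) (hFY : 0 ≤ FY)
    (h : ∀ t : ℝ, |t| ≤ 1 →
      0 ≤ 2 * t * a + t ^ 2 * FX + 2 * (-t) * b + (-t) ^ 2 * FY) : a = b := by
  have hk : ∀ t : ℝ, |t| ≤ 1 → 0 ≤ 2 * t * (a - b) + t ^ 2 * (FX + FY) := by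
    intro t ht
    have := h t ht
    nlinarith [this]
  have := key_lemma (a - b) (FX + FY) 1 one_pos (by linarith) hk
  linarith

lemma diag_real (a b FX FY : ℝ) (hFX : 0 ≤ FX) (hFY : 0 ≤ FY)
    (h : ∀ t : ℝ, |t| ≤ 1/2 →
      0 ≤ 2 * t * a + t ^ 2 * FX + 2 * (-t / (1 + t)) * b + (-t / (1 + t)) ^ 2 * FY) :
    a = b := by
  have hk : ∀ t : ℝ, |t| ≤ 1/2 →
      0 ≤ 2 * t * (a - b) + t ^ 2 * (FX + 4 * FY + 4 * |b|) := by
    intro t ht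
    have h2 := h t ht
    have hu0 : (0:ℝ) < 1 + t := by have := abs_le.mp ht; linarith [this.1]
    set s : ℝ := -t / (1 + t) with hs
    have hsu : s * (1 + t) = -t := by
      rw [hs, div_mul_cancel₀ _ (ne_of_gt hu0)]
    have hsval : s = -t + t ^ 2 / (1 + t) := by
      rw [hs]; field_simp; ring
    have hdiv1 : t ^ 2 / (1 + t) ≤ 2 * t ^ 2 := by
      rw [div_le_iff₀ hu0]
      have := abs_le.mp ht
      nlinarith [sq_nonneg t, this.1]
    have hdiv0 : 0 ≤ t ^ 2 / (1 + t) := by positivity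
    have hsb : 2 * s * b ≤ -2 * t * b + 4 * |b| * t ^ 2 := by
      rw [hsval]
      have h5 : 2 * (t ^ 2 / (1 + t)) * b ≤ 4 * |b| * t ^ 2 := by
        nlinarith [mul_le_mul_of_nonneg_left (le_abs_self b) hdiv0,
          mul_le_mul_of_nonneg_left hdiv1 (abs_nonneg b), abs_nonneg b]
      nlinarith [h5]
    have hs2 : s ^ 2 ≤ 4 * t ^ 2 := by
      have h6 : s ^ 2 * (1 + t) ^ 2 = t ^ 2 := by nlinarith [hsu]
      have hu : (1:ℝ)/2 ≤ 1 + t := by have := abs_le.mp ht; linarith [this.1]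
      nlinarith [mul_nonneg (sq_nonneg s) (show (0:ℝ) ≤ 4 * (1 + t) ^ 2 - 1 by nlinarith)]
    have hs2F : s ^ 2 * FY ≤ 4 * t ^ 2 * FY := by nlinarith [hs2]
    nlinarith [h2, hsb, hs2F]
  have := key_lemma (a - b) (FX + 4 * FY + 4 * |b|) (1/2) (by norm_num)
    (by have := abs_nonneg b; linarith) hk
  linarith

set_option maxHeartbeats 1000000 in
/-- Lemma 2, first-order optimality of the optimal alignment:
if the optimal alignment matrix `Q` between `Z = [X; Y]` and `Z⋆` exists, then
with `X̃ = XQ` and `Ỹ = YQ⁻ᵀ` one has `X̃ᵀ(X̃ − X⋆) = (Ỹ − Y⋆)ᵀỸ`. -/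
theorem alignment_first_order_condition
    {n₁ n₂ r : ℕ}
    (Ustar : Matrix (Fin n₁) (Fin r) ℝ) (Vstar : Matrix (Fin n₂) (Fin r) ℝ)
    (d : Fin r → ℝ) (hd : ∀ i, 0 < d i)
    (hU : Ustarᵀ * Ustar = 1) (hV : Vstarᵀ * Vstar = 1)
    (Xstar : Matrix (Fin n₁) (Fin r) ℝ) (Ystar : Matrix (Fin n₂) (Fin r) ℝ)
    (hXs : Xstar = Ustar * Matrix.diagonal (fun i => Real.sqrt (d i)))
    (hYs : Ystar = Vstar * Matrix.diagonal (fun i => Real.sqrt (d i)))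
    (X : Matrix (Fin n₁) (Fin r) ℝ) (Y : Matrix (Fin n₂) (Fin r) ℝ)
    (Q : Matrix (Fin r) (Fin r) ℝ) (hQ : IsUnit Q)
    (hQopt : ∀ P : Matrix (Fin r) (Fin r) ℝ, IsUnit P →
      (frobNorm (X * Q - Xstar)) ^ 2 + (frobNorm (Y * (Q⁻¹)ᵀ - Ystar)) ^ 2 ≤
        (frobNorm (X * P - Xstar)) ^ 2 + (frobNorm (Y * (P⁻¹)ᵀ - Ystar)) ^ 2) :
    (X * Q)ᵀ * (X * Q - Xstar) = (Y * (Q⁻¹)ᵀ - Ystar)ᵀ * (Y * (Q⁻¹)ᵀ) := by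
  set Xt : Matrix (Fin n₁) (Fin r) ℝ := X * Q with hXt
  set Yt : Matrix (Fin n₂) (Fin r) ℝ := Y * (Q⁻¹)ᵀ with hYt
  set DX : Matrix (Fin n₁) (Fin r) ℝ := Xt - Xstar with hDX
  set DY : Matrix (Fin n₂) (Fin r) ℝ := Yt - Ystar with hDY
  -- general perturbation step
  have hpert : ∀ (E F : Matrix (Fin r) (Fin r) ℝ) (t s : ℝ),
      (1 + t • E) * (1 + s • F) = 1 → (1 + s • F) * (1 + t • E) = 1 →
      0 ≤ 2 * t * ip DX (Xt * E) + t ^ 2 * Fsq (Xt * E)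
        + 2 * s * ip DY (Yt * Fᵀ) + s ^ 2 * Fsq (Yt * Fᵀ) := by
    intro E F t s hEF hFE
    have hunit : IsUnit (1 + t • E) := ⟨⟨_, _, hEF, hFE⟩, rfl⟩
    have hP : IsUnit (Q * (1 + t • E)) := hQ.mul hunit
    have hPinv : (Q * (1 + t • E))⁻¹ = (1 + s • F) * Q⁻¹ := by
      rw [Matrix.mul_inv_rev, Matrix.inv_eq_right_inv hEF]
    have h1 := hQopt (Q * (1 + t • E)) hP
    have hXP : X * (Q * (1 + t • E)) - Xstar = DX + t • (Xt * E) := by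
      rw [← Matrix.mul_assoc, Matrix.mul_add, Matrix.mul_one, Matrix.mul_smul]
      rw [hDX, hXt]
      abel
    have hYP : Y * ((Q * (1 + t • E))⁻¹)ᵀ - Ystar = DY + s • (Yt * Fᵀ) := by
      rw [hPinv, Matrix.transpose_mul, ← Matrix.mul_assoc, Matrix.transpose_add,
        Matrix.transpose_one, Matrix.transpose_smul, Matrix.mul_add, Matrix.mul_one,
        Matrix.mul_smul]
      rw [hDY, hYt]
      abel
    rw [hXP, hYP] at h1
    rw [frob_sq, frob_sq, frob_sq, frob_sq, Fsq_expand, Fsq_expand] at h1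
    rw [hDX, hDY] at h1 ⊢
    linarith
  ext i j
  show (Xtᵀ * DX) i j = (DYᵀ * Yt) i j
  have hgoal : (DYᵀ * Yt) i j = (Ytᵀ * DY) j i := by
    rw [Matrix.mul_apply, Matrix.mul_apply]
    exact Finset.sum_congr rfl fun k _ => by simp [Matrix.transpose_apply, mul_comm]
  rw [hgoal]
  set a : ℝ := (Xtᵀ * DX) i j with ha
  set b : ℝ := (Ytᵀ * DY) j i with hb2
  by_cases hij : i = j
  · -- diagonal case
    subst hij
    set e : Matrix (Fin r) (Fin r) ℝ := Matrix.single i i (1:ℝ) with he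
    have he2 : e * e = e := by
      rw [he]
      have h0 := Matrix.single_mul_single_same (c := (1:ℝ)) i i i (1:ℝ)
      rwa [one_mul] at h0
    refine diag_real a b (Fsq (Xt * e)) (Fsq (Yt * e)) (Fsq_nonneg _) (Fsq_nonneg _) ?_
    intro t ht
    have hu0 : (0:ℝ) < 1 + t := by have := abs_le.mp ht; linarith [this.1]
    set s : ℝ := -t / (1 + t) with hs
    have hsu : s * (1 + t) = -t := by
      rw [hs, div_mul_cancel₀ _ (ne_of_gt hu0)]
    have hEF : (1 + t • e) * (1 + s • e) = 1 := by
      rw [expand_unit, he2]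
      have hz : (t + s) • e + (s * t) • e = 0 := by
        rw [← add_smul, show t + s + s * t = 0 by nlinarith [hsu], zero_smul]
      rw [add_assoc, hz, add_zero]
    have hFE : (1 + s • e) * (1 + t • e) = 1 := by
      rw [expand_unit, he2]
      have hz : (s + t) • e + (t * s) • e = 0 := by
        rw [← add_smul, show s + t + t * s = 0 by nlinarith [hsu], zero_smul]
      rw [add_assoc, hz, add_zero]
    have h2 := hpert e e t s hEF hFE
    have het : eᵀ = e := by rw [he, std_transpose]
    rw [het] at h2
    have hipX : ip (Xt - Xstar) (Xt * e) = a := by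
      rw [he, ip_std, ha, hDX]
    have hipY : ip (Yt - Ystar) (Yt * e) = b := by
      rw [he, ip_std, hb2, hDY]
    rw [hipX, hipY] at h2
    rw [hs] at h2
    linarith [h2]
  · -- off-diagonal case
    set e : Matrix (Fin r) (Fin r) ℝ := Matrix.single i j (1:ℝ) with he
    set f : Matrix (Fin r) (Fin r) ℝ := Matrix.single j i (1:ℝ) with hf
    have he2 : e * e = 0 := by
      rw [he]; exact Matrix.single_mul_single_of_ne (c := (1:ℝ)) i j i (Ne.symm hij) 1
    have hf2 : f * f = 0 := by
      rw [hf]; exact Matrix.single_mul_single_of_ne (c := (1:ℝ)) j i j hij 1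
    refine offdiag_real a b (Fsq (Xt * e)) (Fsq (Yt * f)) (Fsq_nonneg _) (Fsq_nonneg _) ?_
    intro t ht
    have hEF : (1 + t • e) * (1 + (-t) • e) = 1 := by
      rw [expand_unit, he2, smul_zero, add_zero]
      simp
    have hFE : (1 + (-t) • e) * (1 + t • e) = 1 := by
      rw [expand_unit, he2, smul_zero, add_zero]
      simp
    have h2 := hpert e e t (-t) hEF hFE
    have het : eᵀ = f := by rw [he, hf, std_transpose]
    rw [het] at h2
    have hipX : ip (Xt - Xstar) (Xt * e) = a := by
      rw [he, ip_std, ha, hDX]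
    have hipY : ip (Yt - Ystar) (Yt * f) = b := by
      rw [hf, ip_std, hb2, hDY]
    rw [hipX, hipY] at h2
    linarith [h2]
end

section
/- Let X ∈ ℝ^{n₁×r} and Y ∈ ℝ^{n₂×r}. If ‖Y − Y⋆‖ ≤ σ₁(Y⋆)/4, then ‖(XYᵀ − M⋆)Y‖_F ≤ (3/2)σ₁(Y⋆)·(‖(X − X⋆)Yᵀ‖_F + ‖X(Y − Y⋆)ᵀ‖_F + ‖X − X⋆‖_F·‖Y − Y⋆‖_F). Similarly, if ‖X − X⋆‖ ≤ σ₁(X⋆)/4, then ‖(XYᵀ − M⋆)ᵀX‖_F ≤ (3/2)σ₁(X⋆)·(‖(X − X⋆)Yᵀ‖_F + ‖X(Y − Y⋆)ᵀ‖_F + ‖X − X⋆‖_F·‖Y − Y⋆‖_F). -/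
open Matrix BigOperators

section Frob
attribute [local instance] Matrix.frobeniusSeminormedAddCommGroup

lemma frobNorm_eq_norm {m n : ℕ} (A : Matrix (Fin m) (Fin n) ℝ) : frobNorm A = ‖A‖ := by
  rw [Matrix.frobenius_norm_def, frobNorm, Real.sqrt_eq_rpow]
  congr 1
  simp [Real.rpow_two, Real.norm_eq_abs, sq_abs]

lemma frobNorm_nonneg {m n : ℕ} (A : Matrix (Fin m) (Fin n) ℝ) : 0 ≤ frobNorm A :=
  Real.sqrt_nonneg _

lemma frobNorm_transpose {m n : ℕ} (A : Matrix (Fin m) (Fin n) ℝ) : frobNorm Aᵀ = frobNorm A := by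
  rw [frobNorm_eq_norm, frobNorm_eq_norm, Matrix.frobenius_norm_transpose]

lemma frobNorm_mul_le {l m n : ℕ} (A : Matrix (Fin l) (Fin m) ℝ) (B : Matrix (Fin m) (Fin n) ℝ) :
    frobNorm (A * B) ≤ frobNorm A * frobNorm B := by
  simp only [frobNorm_eq_norm]; exact Matrix.frobenius_norm_mul A B

lemma frobNorm_triangle3 {m n : ℕ} (A B C : Matrix (Fin m) (Fin n) ℝ) :
    frobNorm (A + B - C) ≤ frobNorm A + frobNorm B + frobNorm C := by
  simp only [frobNorm_eq_norm]
  calc ‖A + B - C‖ ≤ ‖A + B‖ + ‖C‖ := norm_sub_le _ _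
    _ ≤ ‖A‖ + ‖B‖ + ‖C‖ := by gcongr; exact norm_add_le _ _

end Frob

section Spec
attribute [local instance] Matrix.instL2OpNormedAddCommGroup Matrix.instL2OpMetricSpace

lemma specNorm_eq_norm {m n : ℕ} (A : Matrix (Fin m) (Fin n) ℝ) : specNorm A = ‖A‖ := rfl

lemma specNorm_nonneg {m n : ℕ} (A : Matrix (Fin m) (Fin n) ℝ) : 0 ≤ specNorm A := by
  rw [specNorm_eq_norm]; exact norm_nonneg _

lemma specNorm_transpose {m n : ℕ} (A : Matrix (Fin m) (Fin n) ℝ) : specNorm Aᵀ = specNorm A := by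
  have h : Aᴴ = Aᵀ := by ext i j; simp [Matrix.conjTranspose_apply]
  rw [specNorm_eq_norm, specNorm_eq_norm, ← h, Matrix.l2_opNorm_conjTranspose]

lemma specNorm_le_of_close {m n : ℕ} (A B : Matrix (Fin m) (Fin n) ℝ)
    (h : specNorm (A - B) ≤ specNorm B / 4) : specNorm A ≤ (3/2) * specNorm B := by
  have h0 : 0 ≤ specNorm B := specNorm_nonneg B
  have : specNorm A ≤ specNorm B + specNorm (A - B) := by
    simp only [specNorm_eq_norm]
    calc ‖A‖ = ‖B + (A - B)‖ := by rw [add_sub_cancel]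
      _ ≤ ‖B‖ + ‖A - B‖ := norm_add_le _ _
  linarith

lemma frobNorm_mul_le_spec {l m n : ℕ} (A : Matrix (Fin l) (Fin m) ℝ)
    (B : Matrix (Fin m) (Fin n) ℝ) :
    frobNorm (A * B) ≤ frobNorm A * specNorm B := by
  have hrow : ∀ i, ∑ j, ((A * B) i j) ^ 2 ≤ (specNorm B) ^ 2 * ∑ k, (A i k) ^ 2 := by
    intro i
    have hx := Matrix.l2_opNorm_mulVec Bᵀ ((WithLp.equiv 2 (Fin m → ℝ)).symm (A i))
    have hBt : specNorm Bᵀ = specNorm B := specNorm_transpose B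
    rw [← specNorm_eq_norm] at hx
    have hnx : ‖(WithLp.equiv 2 (Fin m → ℝ)).symm (A i)‖ = Real.sqrt (∑ k, (A i k) ^ 2) := by
      rw [EuclideanSpace.norm_eq]
      refine congrArg Real.sqrt (Finset.sum_congr rfl fun k _ => ?_)
      simp [WithLp.equiv_symm_apply, Real.norm_eq_abs, sq_abs]
    have hny : ‖(EuclideanSpace.equiv (Fin n) ℝ).symm (Bᵀ *ᵥ (WithLp.equiv 2 (Fin m → ℝ)).symm (A i))‖
        = Real.sqrt (∑ j, ((A * B) i j) ^ 2) := by
      rw [EuclideanSpace.norm_eq]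
      refine congrArg Real.sqrt (Finset.sum_congr rfl fun j _ => ?_)
      simp [Matrix.mulVec, Matrix.mul_apply, dotProduct, Real.norm_eq_abs, sq_abs,
        mul_comm]
    rw [hny, hnx, hBt] at hx
    have h1 : Real.sqrt (∑ j, ((A * B) i j) ^ 2) ≤ specNorm B * Real.sqrt (∑ k, (A i k) ^ 2) := hx
    have h2 := mul_self_le_mul_self (Real.sqrt_nonneg _) h1
    rw [Real.mul_self_sqrt (by positivity)] at h2
    calc ∑ j, ((A * B) i j) ^ 2 ≤ (specNorm B * Real.sqrt (∑ k, (A i k) ^ 2)) *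
          (specNorm B * Real.sqrt (∑ k, (A i k) ^ 2)) := h2
      _ = (specNorm B) ^ 2 * (Real.sqrt (∑ k, (A i k) ^ 2) * Real.sqrt (∑ k, (A i k) ^ 2)) := by
          ring
      _ = (specNorm B) ^ 2 * ∑ k, (A i k) ^ 2 := by
          rw [Real.mul_self_sqrt (by positivity)]
  have hsum : ∑ i, ∑ j, ((A * B) i j) ^ 2 ≤ (specNorm B) ^ 2 * ∑ i, ∑ k, (A i k) ^ 2 := by
    rw [Finset.mul_sum]
    exact Finset.sum_le_sum fun i _ => hrow i
  have := Real.sqrt_le_sqrt hsum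
  rw [frobNorm]
  refine this.trans ?_
  rw [Real.sqrt_mul (by positivity), Real.sqrt_sq (specNorm_nonneg B), mul_comm]
  exact le_of_eq rfl

end Spec

lemma decomp {n₁ n₂ r : ℕ} (X Xs : Matrix (Fin n₁) (Fin r) ℝ) (Y Ys : Matrix (Fin n₂) (Fin r) ℝ) :
    X * Yᵀ - Xs * Ysᵀ = (X - Xs) * Yᵀ + X * (Y - Ys)ᵀ - (X - Xs) * (Y - Ys)ᵀ := by
  simp only [Matrix.transpose_sub, Matrix.sub_mul, Matrix.mul_sub]
  abel

lemma frob_core_bound {n₁ n₂ r : ℕ} (X Xs : Matrix (Fin n₁) (Fin r) ℝ)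
    (Y Ys : Matrix (Fin n₂) (Fin r) ℝ) :
    frobNorm (X * Yᵀ - Xs * Ysᵀ) ≤
      frobNorm ((X - Xs) * Yᵀ) + frobNorm (X * (Y - Ys)ᵀ) + frobNorm (X - Xs) * frobNorm (Y - Ys) := by
  rw [decomp]
  refine (frobNorm_triangle3 _ _ _).trans ?_
  gcongr
  refine (frobNorm_mul_le _ _).trans ?_
  rw [frobNorm_transpose]


/-- Lemma 4, smoothness: if `‖Y − Y⋆‖ ≤ σ₁(Y⋆)/4` then
`‖(XYᵀ − M⋆)Y‖_F ≤ (3/2)σ₁(Y⋆)(‖(X−X⋆)Yᵀ‖_F + ‖X(Y−Y⋆)ᵀ‖_F + ‖X−X⋆‖_F‖Y−Y⋆‖_F)`,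
and symmetrically for `X`. -/
theorem smoothness
    {n₁ n₂ r : ℕ}
    (Ustar : Matrix (Fin n₁) (Fin r) ℝ) (Vstar : Matrix (Fin n₂) (Fin r) ℝ)
    (d : Fin r → ℝ) (hd : ∀ i, 0 < d i)
    (hU : Ustarᵀ * Ustar = 1) (hV : Vstarᵀ * Vstar = 1)
    (Mstar : Matrix (Fin n₁) (Fin n₂) ℝ)
    (hM : Mstar = Ustar * Matrix.diagonal d * Vstarᵀ)
    (Xstar : Matrix (Fin n₁) (Fin r) ℝ) (Ystar : Matrix (Fin n₂) (Fin r) ℝ)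
    (hXs : Xstar = Ustar * Matrix.diagonal (fun i => Real.sqrt (d i)))
    (hYs : Ystar = Vstar * Matrix.diagonal (fun i => Real.sqrt (d i)))
    (X : Matrix (Fin n₁) (Fin r) ℝ) (Y : Matrix (Fin n₂) (Fin r) ℝ) :
    (specNorm (Y - Ystar) ≤ specNorm Ystar / 4 →
      frobNorm ((X * Yᵀ - Mstar) * Y) ≤
        (3 / 2) * specNorm Ystar *
          (frobNorm ((X - Xstar) * Yᵀ) + frobNorm (X * (Y - Ystar)ᵀ) +
            frobNorm (X - Xstar) * frobNorm (Y - Ystar))) ∧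
    (specNorm (X - Xstar) ≤ specNorm Xstar / 4 →
      frobNorm ((X * Yᵀ - Mstar)ᵀ * X) ≤
        (3 / 2) * specNorm Xstar *
          (frobNorm ((X - Xstar) * Yᵀ) + frobNorm (X * (Y - Ystar)ᵀ) +
            frobNorm (X - Xstar) * frobNorm (Y - Ystar))) := by
  have hMfac : Mstar = Xstar * Ystarᵀ := by
    have hsq : (Matrix.diagonal fun i => Real.sqrt (d i)) *
        (Matrix.diagonal fun i => Real.sqrt (d i)) = Matrix.diagonal d := by
      rw [Matrix.diagonal_mul_diagonal]
      have h2 : (fun i => Real.sqrt (d i) * Real.sqrt (d i)) = d :=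
        funext fun i => Real.mul_self_sqrt (hd i).le
      rw [h2]
    rw [hM, hXs, hYs, Matrix.transpose_mul, Matrix.diagonal_transpose, ← hsq]
    simp only [Matrix.mul_assoc]
  set T := frobNorm ((X - Xstar) * Yᵀ) + frobNorm (X * (Y - Ystar)ᵀ) +
      frobNorm (X - Xstar) * frobNorm (Y - Ystar) with hT
  have hTnn : 0 ≤ T := by
    have := frobNorm_nonneg ((X - Xstar) * Yᵀ)
    have := frobNorm_nonneg (X * (Y - Ystar)ᵀ)
    have := mul_nonneg (frobNorm_nonneg (X - Xstar)) (frobNorm_nonneg (Y - Ystar))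
    linarith
  have hcore : frobNorm (X * Yᵀ - Mstar) ≤ T := by
    rw [hMfac]; exact frob_core_bound X Xstar Y Ystar
  constructor
  · intro h
    have hS : specNorm Y ≤ (3/2) * specNorm Ystar := specNorm_le_of_close Y Ystar h
    calc frobNorm ((X * Yᵀ - Mstar) * Y) ≤ frobNorm (X * Yᵀ - Mstar) * specNorm Y :=
          frobNorm_mul_le_spec _ _
      _ ≤ T * ((3/2) * specNorm Ystar) := by
          have := frobNorm_nonneg (X * Yᵀ - Mstar)
          have := specNorm_nonneg Y
          nlinarith
      _ = (3 / 2) * specNorm Ystar * T := by ring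
  · intro h
    have hS : specNorm X ≤ (3/2) * specNorm Xstar := specNorm_le_of_close X Xstar h
    calc frobNorm ((X * Yᵀ - Mstar)ᵀ * X) ≤ frobNorm (X * Yᵀ - Mstar)ᵀ * specNorm X :=
          frobNorm_mul_le_spec _ _
      _ = frobNorm (X * Yᵀ - Mstar) * specNorm X := by rw [frobNorm_transpose]
      _ ≤ T * ((3/2) * specNorm Xstar) := by
          have := specNorm_nonneg X
          nlinarith [frobNorm_nonneg (X * Yᵀ - Mstar)]
      _ = (3 / 2) * specNorm Xstar * T := by ring
end
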